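/- Let Q be a symmetric n×n integer matrix, A an m×n integer matrix, b ∈ ℤ^m, C a p×n integer matrix, d ∈ ℤ^p, and let y_1, …, y_r ∈ ℤⁿ be integer vectors spanning the rational nullspace of C (in particular C·y_i = 0 for all i). Suppose that: the system has an optimal solution; every optimal solution x is deep, i.e. x + y_i and x − y_i are feasible for every i ∈ {1,…,r}; and for every i ∈ {1,…,r} the row vector y_i^T Q is a linear combination of the rows of C. Then for every optimal solution x* and every integer vector λ ∈ ℤ^r, the vector x* + λ_1 y_1 + ⋯ + λ_r y_r is also an optimal solution. -/

import Mathlib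

open Matrix

/-- A feasible solution of the system `Ax ≤ b`, `Cx = d` over the integers. -/
def IsFeasible {n m p : ℕ} (A : Matrix (Fin m) (Fin n) ℤ) (b : Fin m → ℤ)
    (C : Matrix (Fin p) (Fin n) ℤ) (d : Fin p → ℤ) (x : Fin n → ℤ) : Prop :=
  A.mulVec x ≤ b ∧ C.mulVec x = d

/-- An optimal solution of the IQP: feasible and minimizing `xᵀQx` among feasible points. -/
def IsOptimal {n m p : ℕ} (Q : Matrix (Fin n) (Fin n) ℤ) (A : Matrix (Fin m) (Fin n) ℤ)
    (b : Fin m → ℤ) (C : Matrix (Fin p) (Fin n) ℤ) (d : Fin p → ℤ) (x : Fin n → ℤ) : Prop :=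
  IsFeasible A b C d x ∧
    ∀ z : Fin n → ℤ, IsFeasible A b C d z → x ⬝ᵥ Q.mulVec x ≤ z ⬝ᵥ Q.mulVec z

/-- if the IQP has an optimal solution, every optimal solution is deep with
respect to integer vectors `y_1, …, y_r` spanning the rational nullspace of `C`, and each
`y_iᵀQ` is a linear combination of the rows of `C`, then for every optimal `x*` and every
integer vector `λ`, `x* + Σ λ_i y_i` is also optimal. -/
theorem stmt_4 (n m p r : ℕ)
    (Q : Matrix (Fin n) (Fin n) ℤ) (hQ : Q.IsSymm)
    (A : Matrix (Fin m) (Fin n) ℤ) (b : Fin m → ℤ)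
    (C : Matrix (Fin p) (Fin n) ℤ) (d : Fin p → ℤ)
    (y : Fin r → Fin n → ℤ)
    (hy0 : ∀ i, C.mulVec (y i) = 0)
    (hspan : ∀ v : Fin n → ℚ, (C.map ((↑) : ℤ → ℚ)).mulVec v = 0 →
      v ∈ Submodule.span ℚ (Set.range fun i => fun j => ((y i j : ℤ) : ℚ)))
    (hex : ∃ x : Fin n → ℤ, IsOptimal Q A b C d x)
    (hdeep : ∀ x : Fin n → ℤ, IsOptimal Q A b C d x →
      ∀ i, IsFeasible A b C d (x + y i) ∧ IsFeasible A b C d (x - y i))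
    (hdep : ∀ i, ∃ lam : Fin p → ℚ,
      ∀ j, ((Matrix.vecMul (y i) Q) j : ℚ) = ∑ l, lam l * (C l j : ℚ))
    (xs : Fin n → ℤ) (hxs : IsOptimal Q A b C d xs) (lam : Fin r → ℤ) :
    IsOptimal Q A b C d (xs + ∑ i, lam i • y i) := by

  classical
  choose lam' hlam' using hdep
  -- key cast lemma
  have key : ∀ i (z : Fin n → ℤ), ((Matrix.vecMul (y i) Q ⬝ᵥ z : ℤ) : ℚ)
      = ∑ l, lam' i l * ((C.mulVec z) l : ℚ) := by
    intro i z
    have h1 : ((Matrix.vecMul (y i) Q ⬝ᵥ z : ℤ) : ℚ)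
        = ∑ j, ((Matrix.vecMul (y i) Q) j : ℚ) * (z j : ℚ) := by
      simp [dotProduct]
    rw [h1]
    have h2 : ∀ j, ((Matrix.vecMul (y i) Q) j : ℚ) * (z j : ℚ)
        = ∑ l, lam' i l * (C l j : ℚ) * (z j : ℚ) := by
      intro j; rw [hlam' i j, Finset.sum_mul]
    simp_rw [h2]
    rw [Finset.sum_comm]
    have h3 : ∀ l, ((C.mulVec z) l : ℚ) = ∑ j, (C l j : ℚ) * (z j : ℚ) := by
      intro l; simp [Matrix.mulVec, dotProduct]
    simp_rw [h3, Finset.mul_sum, mul_assoc]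
  have hyy : ∀ i j, Matrix.vecMul (y i) Q ⬝ᵥ y j = 0 := by
    intro i j
    have h := key i (y j)
    rw [hy0 j] at h
    simp at h
    exact_mod_cast h
  have hconst : ∀ i (z z' : Fin n → ℤ), C.mulVec z = d → C.mulVec z' = d →
      Matrix.vecMul (y i) Q ⬝ᵥ z = Matrix.vecMul (y i) Q ⬝ᵥ z' := by
    intro i z z' hz hz'
    have h1 := key i z
    have h2 := key i z'
    rw [hz] at h1; rw [hz'] at h2
    exact_mod_cast h1.trans h2.symm
  -- symmetry
  have symm2 : ∀ u v : Fin n → ℤ, u ⬝ᵥ Q.mulVec v = v ⬝ᵥ Q.mulVec u := by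
    intro u v
    rw [Matrix.dotProduct_mulVec]
    have : Matrix.vecMul u Q = Q.mulVec u := by
      rw [← hQ.eq, Matrix.mulVec_transpose, hQ.eq]
    rw [this, dotProduct_comm]
  have exp2 : ∀ u v : Fin n → ℤ, (u + v) ⬝ᵥ Q.mulVec (u + v)
      = u ⬝ᵥ Q.mulVec u + 2 * (Matrix.vecMul v Q ⬝ᵥ u) + Matrix.vecMul v Q ⬝ᵥ v := by
    intro u v
    rw [Matrix.mulVec_add, dotProduct_add, add_dotProduct, add_dotProduct]
    have h1 : u ⬝ᵥ Q.mulVec v = Matrix.vecMul v Q ⬝ᵥ u := by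
      rw [symm2 u v, Matrix.dotProduct_mulVec]
    have h2 : v ⬝ᵥ Q.mulVec u = Matrix.vecMul v Q ⬝ᵥ u := Matrix.dotProduct_mulVec v Q u
    have h3 : v ⬝ᵥ Q.mulVec v = Matrix.vecMul v Q ⬝ᵥ v := Matrix.dotProduct_mulVec v Q v
    rw [h1, h2, h3]; ring
  -- one step
  have step : ∀ x : Fin n → ℤ, IsOptimal Q A b C d x →
      ∀ i, IsOptimal Q A b C d (x + y i) ∧ IsOptimal Q A b C d (x - y i) := by
    intro x hx i
    obtain ⟨hfp, hfm⟩ := hdeep x hx i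
    obtain ⟨⟨hAx, hCx⟩, hmin⟩ := hx
    set t := Matrix.vecMul (y i) Q ⬝ᵥ x with ht
    have e1 : (x + y i) ⬝ᵥ Q.mulVec (x + y i) = x ⬝ᵥ Q.mulVec x + 2 * t := by
      rw [exp2, hyy i i]; ring
    have e2 : (x - y i) ⬝ᵥ Q.mulVec (x - y i) = x ⬝ᵥ Q.mulVec x - 2 * t := by
      have hsub : x - y i = x + (-(y i)) := by rw [sub_eq_add_neg]
      rw [hsub, exp2]
      rw [Matrix.neg_vecMul, neg_dotProduct, neg_dotProduct, dotProduct_neg, neg_neg,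
        hyy i i]
      ring
    have ineq1 := hmin _ hfp
    have ineq2 := hmin _ hfm
    rw [e1] at ineq1
    rw [e2] at ineq2
    have ht0 : t = 0 := by linarith
    refine ⟨⟨hfp, ?_⟩, ⟨hfm, ?_⟩⟩ <;> intro z hz <;>
      [rw [e1, ht0]; rw [e2, ht0]] <;> simpa using hmin z hz
  -- k steps in one direction
  have stepk : ∀ i (k : ℤ) (x : Fin n → ℤ), IsOptimal Q A b C d x →
      IsOptimal Q A b C d (x + k • y i) := by
    intro i k
    induction k using Int.induction_on with
    | zero => intro x hx; simpa using hx
    | succ k ih =>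
      intro x hx
      have h2 := (step _ (ih x hx) i).1
      have : x + ((k : ℤ) + 1) • y i = (x + (k : ℤ) • y i) + y i := by
        rw [add_smul, one_smul, add_assoc]
      rwa [this]
    | pred k ih =>
      intro x hx
      have h2 := (step _ (ih x hx) i).2
      have : x + (-(k : ℤ) - 1) • y i = (x + (-(k : ℤ)) • y i) - y i := by
        rw [sub_smul, one_smul, sub_eq_add_neg, ← add_assoc, ← sub_eq_add_neg]
      rwa [this]
  have main : ∀ s : Finset (Fin r), IsOptimal Q A b C d (xs + ∑ i ∈ s, lam i • y i) := by
    intro s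
    induction s using Finset.induction_on with
    | empty => simpa using hxs
    | @insert a s ha ih =>
      rw [Finset.sum_insert ha]
      have : xs + (lam a • y a + ∑ i ∈ s, lam i • y i)
          = (xs + ∑ i ∈ s, lam i • y i) + lam a • y a := by
        abel
      rw [this]
      exact stepk a (lam a) _ ih
  exact main Finset.univ
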